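/- In every connected graph with at least 3 vertices, there exists a maximum matching in which every support vertex is matched by an edge joining it to one of its leaves. -/

import Mathlib

open SimpleGraph Finset

private lemma walk_closed {V : Type*} {G : SimpleGraph V} {s : Set V}
    (h : ∀ a ∈ s, ∀ b, G.Adj a b → b ∈ s) {x y : V} (p : G.Walk x y) (hx : x ∈ s) : y ∈ s := by
  induction p with
  | nil => exact hx
  | cons h' p ih => exact ih (h _ hx _ h')

private lemma leaf_unique_nbr {V : Type*} [Fintype V] [DecidableEq V] {G : SimpleGraph V}
    [DecidableRel G.Adj] {u a b : V} (hu : G.degree u = 1)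
    (ha : G.Adj u a) (hb : G.Adj u b) : a = b := by
  have := Finset.card_le_one.mp (le_of_eq hu)
  exact this a (by simpa using ha) b (by simpa using hb)

/-- In every connected graph with at least 3 vertices, there is a maximum matching
in which every support vertex is matched by an edge to one of its leaves. -/
theorem stmt8 {V : Type*} [Fintype V] [DecidableEq V] (G : SimpleGraph V)
    [DecidableRel G.Adj] (hc : G.Connected) (hn : 3 ≤ Fintype.card V) :
    ∃ M : G.Subgraph, M.IsMatching ∧
      (∀ M' : G.Subgraph, M'.IsMatching → M'.edgeSet.ncard ≤ M.edgeSet.ncard) ∧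
      (∀ v : V, (∃ u, G.Adj v u ∧ G.degree u = 1) →
        ∃ w, G.Adj v w ∧ G.degree w = 1 ∧ M.Adj v w) := by
  classical
  haveI : Finite G.Subgraph := by
    apply Finite.of_injective (fun M : G.Subgraph => (M.verts, M.Adj))
    intro A B h
    exact SimpleGraph.Subgraph.ext (congrArg Prod.fst h) (congrArg Prod.snd h)
  set N := Fintype.card V with hN
  set good : G.Subgraph → Set V := fun M =>
    {x : V | (∃ u, G.Adj x u ∧ G.degree u = 1) →
      ∃ w, G.Adj x w ∧ G.degree w = 1 ∧ M.Adj x w} with hgood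
  set f : G.Subgraph → ℕ := fun M => M.edgeSet.ncard * (N + 1) + (good M).ncard with hf
  set S : Set G.Subgraph := {M | M.IsMatching} with hS
  have hSne : S.Nonempty := ⟨⊥, fun v hv => by simp at hv⟩
  obtain ⟨M, hM, hmax⟩ := Set.exists_max_image S f S.toFinite hSne
  have hMm : M.IsMatching := hM
  have hgood_le : ∀ M' : G.Subgraph, (good M').ncard ≤ N := by
    intro M'
    calc (good M').ncard ≤ (Set.univ : Set V).ncard :=
          Set.ncard_le_ncard (Set.subset_univ _) (Set.toFinite _)
      _ = N := by rw [Set.ncard_univ, Nat.card_eq_fintype_card]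
  have hedge : ∀ M' : G.Subgraph, M'.IsMatching → M'.edgeSet.ncard ≤ M.edgeSet.ncard := by
    intro M' hM'
    by_contra hlt
    push_neg at hlt
    have h1 : f M' ≤ f M := hmax M' hM'
    have h2 := hgood_le M
    have h3 := hgood_le M'
    have h4 : M.edgeSet.ncard + 1 ≤ M'.edgeSet.ncard := hlt
    simp only [hf] at h1
    nlinarith [Nat.mul_le_mul_right (N + 1) h4]
  refine ⟨M, hMm, hedge, ?_⟩
  intro v hv
  by_contra hbad
  obtain ⟨u, hvu, hu1⟩ := hv
  have hvnotleaf : G.degree v ≠ 1 := by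
    intro hv1
    obtain ⟨z, hz⟩ : ∃ z : V, z ∉ ({u, v} : Set V) := by
      by_contra hall
      push_neg at hall
      have hsub : (Finset.univ : Finset V) ⊆ {u, v} := by
        intro z _
        have := hall z
        simp only [Set.mem_insert_iff, Set.mem_singleton_iff] at this
        simp [this]
      have h1 := Finset.card_le_card hsub
      have h2 : ({u, v} : Finset V).card ≤ 2 :=
        (Finset.card_insert_le _ _).trans (by simp)
      simp only [Finset.card_univ] at h1
      omega
    obtain ⟨p⟩ := hc.preconnected v z
    refine hz (walk_closed ?_ p (by simp))
    rintro a ha b hab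
    simp only [Set.mem_insert_iff, Set.mem_singleton_iff] at ha ⊢
    rcases ha with rfl | rfl
    · right; exact leaf_unique_nbr hu1 hab hvu.symm
    · left; exact leaf_unique_nbr hv1 hab hvu
  have hu_ne_v : u ≠ v := hvu.ne'
  have hu_notin : u ∉ M.verts := by
    intro hu
    obtain ⟨z, hz, _⟩ := hMm hu
    have hzv : z = v := leaf_unique_nbr hu1 (M.adj_sub hz) hvu.symm
    exact hbad ⟨u, hvu, hu1, (hzv ▸ hz).symm⟩
  have hMvu : ¬ M.Adj v u := fun h => hu_notin (M.edge_vert h.symm)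
  have hedgeFin : ∀ M' : G.Subgraph, M'.edgeSet.Finite := fun _ => Set.toFinite _
  by_cases hvM : v ∈ M.verts
  · -- v is matched to some w ≠ u; swap the edge vw for vu
    obtain ⟨w, hw, hwuniq⟩ := hMm hvM
    obtain ⟨y0, hy0, hy0u⟩ := hMm (M.edge_vert hw.symm)
    have hwuniq' : ∀ y, M.Adj w y → y = v := fun y hy => (hy0u y hy).trans (hy0u v hw.symm).symm
    have hv_ne_w : v ≠ w := hw.ne
    have hu_ne_w : u ≠ w := fun h => hu_notin (h ▸ M.edge_vert hw.symm)
    set M' : G.Subgraph :=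
      { verts := insert u (M.verts \ {w})
        Adj := fun a b => (M.Adj a b ∧ a ≠ w ∧ b ≠ w) ∨ (a = v ∧ b = u) ∨ (a = u ∧ b = v)
        adj_sub := by
          rintro a b (⟨h, -, -⟩ | ⟨rfl, rfl⟩ | ⟨rfl, rfl⟩)
          · exact M.adj_sub h
          · exact hvu
          · exact hvu.symm
        edge_vert := by
          rintro a b (⟨h, ha, -⟩ | ⟨rfl, rfl⟩ | ⟨rfl, rfl⟩)
          · exact Set.mem_insert_of_mem _ ⟨M.edge_vert h, ha⟩
          · exact Set.mem_insert_of_mem _ ⟨hvM, hv_ne_w⟩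
          · exact Set.mem_insert _ _
        symm := by
          constructor
          rintro a b (⟨h, ha, hb⟩ | ⟨rfl, rfl⟩ | ⟨rfl, rfl⟩)
          · exact Or.inl ⟨h.symm, hb, ha⟩
          · exact Or.inr (Or.inr ⟨rfl, rfl⟩)
          · exact Or.inr (Or.inl ⟨rfl, rfl⟩) } with hM'def
    have hM'adj : ∀ a b, M'.Adj a b ↔
        (M.Adj a b ∧ a ≠ w ∧ b ≠ w) ∨ (a = v ∧ b = u) ∨ (a = u ∧ b = v) := fun _ _ => Iff.rfl
    have hM'm : M'.IsMatching := by
      intro x hx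
      rcases hx with rfl | ⟨hxM, hxw⟩
      · -- x = u, partner v
        refine ⟨v, Or.inr (Or.inr ⟨rfl, rfl⟩), ?_⟩
        rintro y (⟨h, -, -⟩ | ⟨h, rfl⟩ | ⟨-, rfl⟩)
        · exact absurd (M.edge_vert h) hu_notin
        · exact absurd h hu_ne_v
        · rfl
      · simp only [Set.mem_singleton_iff] at hxw
        by_cases hxv : x = v
        · subst hxv
          refine ⟨u, Or.inr (Or.inl ⟨rfl, rfl⟩), ?_⟩
          rintro y (⟨h, -, hy⟩ | ⟨-, rfl⟩ | ⟨h, -⟩)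
          · exact absurd (hwuniq y h) hy
          · rfl
          · exact absurd h.symm hu_ne_v
        · have hxu : x ≠ u := fun h => hu_notin (h ▸ hxM)
          obtain ⟨y, hy, hyu⟩ := hMm hxM
          have hy_ne_w : y ≠ w := fun h => hxv (hwuniq' x (h ▸ hy).symm)
          refine ⟨y, Or.inl ⟨hy, hxw, hy_ne_w⟩, ?_⟩
          rintro y' (⟨h, -, -⟩ | ⟨h, -⟩ | ⟨h, -⟩)
          · exact hyu y' h
          · exact absurd h hxv
          · exact absurd h hxu
    have hedgeEq : M'.edgeSet = insert s(v, u) (M.edgeSet \ {s(v, w)}) := by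
      ext e
      induction e using Sym2.ind with
      | _ a b =>
        simp only [SimpleGraph.Subgraph.mem_edgeSet, Set.mem_insert_iff, Set.mem_diff,
          Set.mem_singleton_iff, hM'adj, Sym2.eq_iff]
        constructor
        · rintro (⟨h, ha, hb⟩ | ⟨rfl, rfl⟩ | ⟨rfl, rfl⟩)
          · refine Or.inr ⟨h, ?_⟩
            rintro (⟨-, rfl⟩ | ⟨rfl, -⟩) <;> simp_all
          · exact Or.inl (Or.inl ⟨rfl, rfl⟩)
          · exact Or.inl (Or.inr ⟨rfl, rfl⟩)
        · rintro ((⟨rfl, rfl⟩ | ⟨rfl, rfl⟩) | ⟨h, hne⟩)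
          · exact Or.inr (Or.inl ⟨rfl, rfl⟩)
          · exact Or.inr (Or.inr ⟨rfl, rfl⟩)
          · refine Or.inl ⟨h, ?_, ?_⟩
            · rintro rfl
              exact hne (Or.inr ⟨rfl, hwuniq' b h⟩)
            · rintro rfl
              exact hne (Or.inl ⟨hwuniq' a h.symm, rfl⟩)
    have hcard : M'.edgeSet.ncard = M.edgeSet.ncard := by
      rw [hedgeEq]
      have h1 : s(v, u) ∉ M.edgeSet \ {s(v, w)} := by
        rintro ⟨h, -⟩
        exact hMvu h
      rw [Set.ncard_insert_of_notMem h1 (hedgeFin M).diff,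
        Set.ncard_diff_singleton_add_one (SimpleGraph.Subgraph.mem_edgeSet.mpr hw) (hedgeFin M)]
    have hsub : good M ⊆ good M' := by
      intro x hx hsupp
      obtain ⟨wx, h1, h2, h3⟩ := hx hsupp
      have hx_ne_w : x ≠ w := by
        rintro rfl
        exact hvnotleaf ((hwuniq' wx h3) ▸ h2)
      have hwx_ne_w : wx ≠ w := by
        rintro rfl
        exact hbad ⟨wx, (hwuniq' x h3.symm) ▸ h1, h2, (hwuniq' x h3.symm) ▸ h3⟩
      exact ⟨wx, h1, h2, Or.inl ⟨h3, hx_ne_w, hwx_ne_w⟩⟩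
    have hvM' : v ∈ good M' := fun _ => ⟨u, hvu, hu1, Or.inr (Or.inl ⟨rfl, rfl⟩)⟩
    have hvnM : v ∉ good M := fun h => hbad (h ⟨u, hvu, hu1⟩)
    have hglt : (good M).ncard < (good M').ncard :=
      Set.ncard_lt_ncard ⟨hsub, fun h => hvnM (h hvM')⟩ (Set.toFinite _)
    have hle : f M' ≤ f M := hmax M' hM'm
    simp only [hf, hcard] at hle
    omega
  · -- v is unmatched; add the edge vu
    set M' : G.Subgraph :=
      { verts := insert u (insert v M.verts)
        Adj := fun a b => M.Adj a b ∨ (a = v ∧ b = u) ∨ (a = u ∧ b = v)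
        adj_sub := by
          rintro a b (h | ⟨rfl, rfl⟩ | ⟨rfl, rfl⟩)
          · exact M.adj_sub h
          · exact hvu
          · exact hvu.symm
        edge_vert := by
          rintro a b (h | ⟨rfl, rfl⟩ | ⟨rfl, rfl⟩)
          · exact Set.mem_insert_of_mem _ (Set.mem_insert_of_mem _ (M.edge_vert h))
          · exact Set.mem_insert_of_mem _ (Set.mem_insert _ _)
          · exact Set.mem_insert _ _
        symm := by
          constructor
          rintro a b (h | ⟨rfl, rfl⟩ | ⟨rfl, rfl⟩)
          · exact Or.inl h.symm
          · exact Or.inr (Or.inr ⟨rfl, rfl⟩)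
          · exact Or.inr (Or.inl ⟨rfl, rfl⟩) } with hM'def
    have hM'm : M'.IsMatching := by
      intro x hx
      rcases hx with rfl | rfl | hxM
      · refine ⟨v, Or.inr (Or.inr ⟨rfl, rfl⟩), ?_⟩
        rintro y (h | ⟨h, rfl⟩ | ⟨-, rfl⟩)
        · exact absurd (M.edge_vert h) hu_notin
        · exact absurd h hu_ne_v
        · rfl
      · refine ⟨u, Or.inr (Or.inl ⟨rfl, rfl⟩), ?_⟩
        rintro y (h | ⟨-, rfl⟩ | ⟨h, -⟩)
        · exact absurd (M.edge_vert h) hvM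
        · rfl
        · exact absurd h.symm hu_ne_v
      · obtain ⟨y, hy, hyu⟩ := hMm hxM
        refine ⟨y, Or.inl hy, ?_⟩
        rintro y' (h | ⟨h, -⟩ | ⟨h, -⟩)
        · exact hyu y' h
        · exact absurd (h ▸ hxM) hvM
        · exact absurd (h ▸ hxM) hu_notin
    have hedgeEq : M'.edgeSet = insert s(v, u) M.edgeSet := by
      ext e
      induction e using Sym2.ind with
      | _ a b =>
        simp only [SimpleGraph.Subgraph.mem_edgeSet, Set.mem_insert_iff, Sym2.eq_iff]
        show (M.Adj a b ∨ _ ∨ _) ↔ _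
        constructor
        · rintro (h | ⟨rfl, rfl⟩ | ⟨rfl, rfl⟩)
          · exact Or.inr h
          · exact Or.inl (Or.inl ⟨rfl, rfl⟩)
          · exact Or.inl (Or.inr ⟨rfl, rfl⟩)
        · rintro ((⟨rfl, rfl⟩ | ⟨rfl, rfl⟩) | h)
          · exact Or.inr (Or.inl ⟨rfl, rfl⟩)
          · exact Or.inr (Or.inr ⟨rfl, rfl⟩)
          · exact Or.inl h
    have hcard : M'.edgeSet.ncard = M.edgeSet.ncard + 1 := by
      rw [hedgeEq, Set.ncard_insert_of_notMem (fun h => hMvu (SimpleGraph.Subgraph.mem_edgeSet.mp h)) (hedgeFin M)]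
    have := hedge M' hM'm
    omega
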